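/- Let Λ be a lattice in ℝ², i.e. Λ = AℤΒ² for some invertible real 2×2 matrix A. Then the following are equivalent: (i) the image P₂(Λ) of Λ under the projection P₂ : ℝ² → ℝ, (x,y) ↦ y, is a discrete subgroup of ℝ; (ii) there exists a generator matrix for Λ (a matrix B with Bℤ² = Λ) which is in Hermite normal form, i.e. upper triangular with diagonal entries a,d > 0 and upper-right entry b satisfying 0 ≤ b < a. -/

import Mathlib

/-- The lattice `A ℤ²` generated by a real `2 × 2` matrix `A`. -/
def latticePts (A : Matrix (Fin 2) (Fin 2) ℝ) : Set (Fin 2 → ℝ) :=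
  {x | ∃ m n : ℤ, x = A.mulVec ![(m : ℝ), (n : ℝ)]}

/-- A real `2 × 2` matrix `[[a,b],[c,d]]` is in Hermite normal form if `c = 0`,
`a, d > 0` and `0 ≤ b < a`. -/
def IsHermiteNF (B : Matrix (Fin 2) (Fin 2) ℝ) : Prop :=
  B 1 0 = 0 ∧ 0 < B 0 0 ∧ 0 < B 1 1 ∧ 0 ≤ B 0 1 ∧ B 0 1 < B 0 0

lemma lattice_unimod (A : Matrix (Fin 2) (Fin 2) ℝ) (a b c d : ℤ)
    (h : (a * d - b * c) * (a * d - b * c) = 1) :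
    latticePts (A * !![(a : ℝ), (b : ℝ); (c : ℝ), (d : ℝ)]) = latticePts A := by
  set N : Matrix (Fin 2) (Fin 2) ℝ := !![(a : ℝ), (b : ℝ); (c : ℝ), (d : ℝ)] with hN
  have hmv : ∀ m n : ℤ, N.mulVec ![(m : ℝ), (n : ℝ)] =
      ![((a * m + b * n : ℤ) : ℝ), ((c * m + d * n : ℤ) : ℝ)] := by
    intro m n
    funext i
    fin_cases i <;>
      simp [hN, Matrix.mulVec, dotProduct, Fin.sum_univ_two] <;> push_cast <;> ring
  ext x
  constructor
  · rintro ⟨m, n, rfl⟩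
    exact ⟨a * m + b * n, c * m + d * n, by rw [← Matrix.mulVec_mulVec, hmv]⟩
  · rintro ⟨m, n, rfl⟩
    set e := a * d - b * c with he
    refine ⟨e * (d * m - b * n), e * (a * n - c * m), ?_⟩
    rw [← Matrix.mulVec_mulVec, hmv]
    congr 1
    have h1 : a * (e * (d * m - b * n)) + b * (e * (a * n - c * m)) = m := by
      linear_combination m * h
    have h2 : c * (e * (d * m - b * n)) + d * (e * (a * n - c * m)) = n := by
      linear_combination n * h
    rw [h1, h2]

lemma lattice_hnf_discrete (B : Matrix (Fin 2) (Fin 2) ℝ) (h10 : B 1 0 = 0) :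
    DiscreteTopology ((fun x : Fin 2 → ℝ => x 1) '' latticePts B : Set ℝ) := by
  have him : ((fun x : Fin 2 → ℝ => x 1) '' latticePts B : Set ℝ) =
      (AddSubgroup.zmultiples (B 1 1) : Set ℝ) := by
    ext y
    simp only [Set.mem_image, latticePts, Set.mem_setOf_eq, SetLike.mem_coe,
      AddSubgroup.mem_zmultiples_iff]
    constructor
    · rintro ⟨x, ⟨m, n, rfl⟩, rfl⟩
      refine ⟨n, ?_⟩
      simp [Matrix.mulVec, dotProduct, Fin.sum_univ_two, h10, zsmul_eq_mul, mul_comm]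
    · rintro ⟨n, rfl⟩
      refine ⟨B.mulVec ![(0 : ℤ), (n : ℝ)], ⟨0, n, rfl⟩, ?_⟩
      simp [Matrix.mulVec, dotProduct, Fin.sum_univ_two, h10, zsmul_eq_mul, mul_comm]
  rw [him]
  exact inferInstanceAs (DiscreteTopology (AddSubgroup.zmultiples (B 1 1)))

lemma lattice_discrete_hnf (A : Matrix (Fin 2) (Fin 2) ℝ) (hA : A.det ≠ 0)
    (hD : DiscreteTopology ((fun x : Fin 2 → ℝ => x 1) '' latticePts A : Set ℝ)) :
    ∃ B : Matrix (Fin 2) (Fin 2) ℝ, latticePts B = latticePts A ∧ IsHermiteNF B := by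
  set c : ℝ := A 1 0 with hc'
  set d : ℝ := A 1 1 with hd'
  -- the image set
  set S : Set ℝ := ((fun x : Fin 2 → ℝ => x 1) '' latticePts A : Set ℝ) with hS
  have hmemS : ∀ y : ℝ, y ∈ S ↔ ∃ m n : ℤ, y = c * m + d * n := by
    intro y
    constructor
    · rintro ⟨x, ⟨m, n, rfl⟩, rfl⟩
      exact ⟨m, n, by simp [Matrix.mulVec, dotProduct, Fin.sum_univ_two]; rfl⟩
    · rintro ⟨m, n, rfl⟩
      exact ⟨A.mulVec ![(m : ℝ), (n : ℝ)], ⟨m, n, rfl⟩,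
        by simp [Matrix.mulVec, dotProduct, Fin.sum_univ_two]; rfl⟩
  -- S as an additive subgroup
  set G : AddSubgroup ℝ := AddSubgroup.zmultiples c ⊔ AddSubgroup.zmultiples d with hG
  have hGS : (G : Set ℝ) = S := by
    ext y
    rw [hmemS y]
    constructor
    · intro hy
      rcases (AddSubgroup.mem_sup).1 hy with ⟨u, hu, v, hv, rfl⟩
      rcases AddSubgroup.mem_zmultiples_iff.1 hu with ⟨m, rfl⟩
      rcases AddSubgroup.mem_zmultiples_iff.1 hv with ⟨n, rfl⟩
      exact ⟨m, n, by simp [zsmul_eq_mul, mul_comm]⟩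
    · rintro ⟨m, n, rfl⟩
      refine (AddSubgroup.mem_sup).2 ⟨c * m, ?_, d * n, ?_, rfl⟩
      · exact AddSubgroup.mem_zmultiples_iff.2 ⟨m, by simp [zsmul_eq_mul, mul_comm]⟩
      · exact AddSubgroup.mem_zmultiples_iff.2 ⟨n, by simp [zsmul_eq_mul, mul_comm]⟩
  -- isolation of 0 in G
  have h0S : (0 : ℝ) ∈ S := (hmemS 0).2 ⟨0, 0, by simp⟩
  have hiso : ∃ ε > (0 : ℝ), ∀ y ∈ S, |y| < ε → y = 0 := by
    have hop : IsOpen ({(⟨0, h0S⟩ : S)} : Set S) := isOpen_discrete _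
    rw [Metric.isOpen_iff] at hop
    rcases hop _ rfl with ⟨ε, hε, hball⟩
    refine ⟨ε, hε, fun y hy hlt => ?_⟩
    have : (⟨y, hy⟩ : S) ∈ Metric.ball (⟨0, h0S⟩ : S) ε := by
      rw [Metric.mem_ball, Subtype.dist_eq]
      simpa [Real.dist_eq] using hlt
    have := hball this
    simpa using congrArg Subtype.val this
  obtain ⟨ε, hε, hisol⟩ := hiso
  -- G is cyclic
  obtain ⟨g, hGg⟩ : ∃ g : ℝ, G = AddSubgroup.closure {g} := by
    refine AddSubgroup.cyclic_of_isolated_zero hε ?_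
    rw [Set.disjoint_left]
    rintro y hyG ⟨hy0, hyε⟩
    have : y = 0 := hisol y (hGS ▸ hyG) (by rw [abs_of_pos hy0]; exact hyε)
    exact absurd this (ne_of_gt hy0)
  -- c and d are multiples of g
  have hcG : c ∈ G := hG ▸ AddSubgroup.mem_sup_left (AddSubgroup.mem_zmultiples c)
  have hdG : d ∈ G := hG ▸ AddSubgroup.mem_sup_right (AddSubgroup.mem_zmultiples d)
  obtain ⟨p, hp⟩ := AddSubgroup.mem_closure_singleton.1 (hGg ▸ hcG)
  obtain ⟨q, hq⟩ := AddSubgroup.mem_closure_singleton.1 (hGg ▸ hdG)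
  rw [zsmul_eq_mul] at hp hq
  -- g itself is in G
  have hgG : g ∈ G := hGg ▸ AddSubgroup.subset_closure rfl
  obtain ⟨m₀, n₀, hg⟩ := (hmemS g).1 (hGS ▸ hgG)
  -- g ≠ 0 since the second row of A is nonzero
  have hdetA : A.det = A 0 0 * d - A 0 1 * c := by
    rw [Matrix.det_fin_two]
  have hgne : g ≠ 0 := by
    rintro rfl
    apply hA
    rw [hdetA, ← hp, ← hq]
    ring
  -- Bezout relation
  rw [← hp, ← hq] at hg
  have hbez : (p : ℤ) * m₀ + q * n₀ = 1 := by
    have hr : ((p : ℝ) * m₀ + q * n₀) * g = 1 * g := by linear_combination -hg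
    exact_mod_cast mul_right_cancel₀ hgne hr
  -- sign corrections
  set α : ℝ := A 0 0 * (-q) + A 0 1 * p with hα'
  set β : ℝ := A 0 0 * m₀ + A 0 1 * n₀ with hβ'
  have hαg : A.det = -(g * α) := by
    rw [hdetA, ← hp, ← hq, hα']; push_cast; ring
  have hαne : α ≠ 0 := fun h0 => hA (by rw [hαg, h0, mul_zero, neg_zero])
  set ε : ℤ := if 0 < α then 1 else -1 with hε'
  set δ : ℤ := if 0 < g then 1 else -1 with hδ'
  have hε2 : ε * ε = 1 := by rw [hε']; split_ifs <;> norm_num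
  have hδ2 : δ * δ = 1 := by rw [hδ']; split_ifs <;> norm_num
  have hεα : 0 < (ε : ℝ) * α := by
    rw [hε']; split_ifs with h
    · simpa using h
    · push_cast; rcases hαne.lt_or_gt with h' | h' <;> nlinarith
  have hδg : 0 < (δ : ℝ) * g := by
    rw [hδ']; split_ifs with h
    · simpa using h
    · push_cast; rcases hgne.lt_or_gt with h' | h' <;> nlinarith
  set k : ℤ := ⌊((δ : ℝ) * β) / ((ε : ℝ) * α)⌋ with hk'
  -- the unimodular matrix
  set n00 : ℤ := ε * (-q) with hn00
  set n10 : ℤ := ε * p with hn10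
  set n01 : ℤ := δ * m₀ + k * ε * q with hn01
  set n11 : ℤ := δ * n₀ - k * ε * p with hn11
  have hdetN : n00 * n11 - n01 * n10 = -(ε * δ) := by
    rw [hn00, hn10, hn01, hn11]
    linear_combination (-(ε * δ)) * hbez
  set B : Matrix (Fin 2) (Fin 2) ℝ :=
    A * !![(n00 : ℝ), (n01 : ℝ); (n10 : ℝ), (n11 : ℝ)] with hB
  refine ⟨B, ?_, ?_, ?_, ?_, ?_, ?_⟩
  · apply lattice_unimod
    rw [hdetN]
    push_cast
    linear_combination (δ * δ) * hε2 + hδ2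
  case _ =>
    have h : B 1 0 = c * n00 + d * n10 := by
      rw [hB]; simp [Matrix.mul_apply, Fin.sum_univ_two]; rfl
    rw [h, hn00, hn10, ← hp, ← hq]; push_cast; ring
  case _ =>
    have h : B 0 0 = (ε : ℝ) * α := by
      rw [hB]; simp only [Matrix.mul_apply, Fin.sum_univ_two]
      simp [hn00, hn10, hα']; push_cast; ring
    rw [h]; exact hεα
  case _ =>
    have hbezR : (p : ℝ) * m₀ + q * n₀ = 1 := by exact_mod_cast hbez
    have h : B 1 1 = (δ : ℝ) * g := by
      rw [hB]; simp only [Matrix.mul_apply, Fin.sum_univ_two]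
      simp only [Matrix.cons_val', Matrix.cons_val_zero, Matrix.cons_val_one, Matrix.head_cons,
        Matrix.empty_val', Matrix.cons_val_fin_one, Matrix.head_fin_const, Matrix.of_apply]
      rw [show A 1 0 = c from rfl, show A 1 1 = d from rfl, ← hp, ← hq, hn01, hn11]
      push_cast
      linear_combination ((δ : ℝ) * g) * hbezR
    rw [h]; exact hδg
  case _ =>
    have h : B 0 1 = (δ : ℝ) * β - (k : ℝ) * ((ε : ℝ) * α) := by
      rw [hB]; simp only [Matrix.mul_apply, Fin.sum_univ_two]
      simp [hn01, hn11, hα', hβ']; push_cast; ring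
    rw [h]
    have h1 : (k : ℝ) ≤ ((δ : ℝ) * β) / ((ε : ℝ) * α) := by rw [hk']; exact Int.floor_le _
    have h2 : (k : ℝ) * ((ε : ℝ) * α) ≤ (δ : ℝ) * β := by
      rw [← le_div_iff₀ hεα] at *; exact h1
    linarith
  case _ =>
    have h01 : B 0 1 = (δ : ℝ) * β - (k : ℝ) * ((ε : ℝ) * α) := by
      rw [hB]; simp only [Matrix.mul_apply, Fin.sum_univ_two]
      simp [hn01, hn11, hα', hβ']; push_cast; ring
    have h00 : B 0 0 = (ε : ℝ) * α := by
      rw [hB]; simp only [Matrix.mul_apply, Fin.sum_univ_two]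
      simp [hn00, hn10, hα']; push_cast; ring
    rw [h01, h00]
    have h1 : ((δ : ℝ) * β) / ((ε : ℝ) * α) < (k : ℝ) + 1 := by
      rw [hk']; exact Int.lt_floor_add_one _
    have h2 : (δ : ℝ) * β < ((k : ℝ) + 1) * ((ε : ℝ) * α) := by
      rw [div_lt_iff₀ hεα] at h1; exact h1
    linarith

/-- A lattice `Λ = Aℤ²` in `ℝ²` has a discrete image under the second-coordinate
projection if and only if it possesses a generator matrix in Hermite normal form. -/
theorem stmt_0 (A : Matrix (Fin 2) (Fin 2) ℝ) (hA : A.det ≠ 0) :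
    DiscreteTopology ((fun x : Fin 2 → ℝ => x 1) '' latticePts A : Set ℝ) ↔
      ∃ B : Matrix (Fin 2) (Fin 2) ℝ, latticePts B = latticePts A ∧ IsHermiteNF B := by
  constructor
  · exact lattice_discrete_hnf A hA
  · rintro ⟨B, hBA, h10, _⟩
    rw [← hBA]
    exact lattice_hnf_discrete B h10
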